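/- There exists a biconnected bipartite planar graph G of maximum degree 4 on 10 vertices such that every vertex of G lies in some minimum vertex cover of G, yet evc(G) ≠ mvc(G). -/

import Mathlib

namespace EVC

open SimpleGraph

variable {V : Type*}

/-- `S` is a vertex cover of `G`. -/
def IsVC (G : SimpleGraph V) (S : Set V) : Prop :=
  ∀ ⦃u v : V⦄, G.Adj u v → u ∈ S ∨ v ∈ S

/-- The minimum vertex cover number of `G`. -/
noncomputable def mvc (G : SimpleGraph V) : ℕ :=
  sInf {k | ∃ S : Set V, IsVC G S ∧ S.ncard = k}

/-- The minimum size of a vertex cover of `G` containing all vertices of `U`. -/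
noncomputable def mvcOn (G : SimpleGraph V) (U : Set V) : ℕ :=
  sInf {k | ∃ S : Set V, IsVC G S ∧ U ⊆ S ∧ S.ncard = k}

/-- Configuration `S'` is obtained from configuration `S` by a legal move of the guards
defending an attack on the edge `uv`: each guard stays or moves to an adjacent vertex
(at most one guard per vertex), and some guard moves across the attacked edge `uv`. -/
def Defends (G : SimpleGraph V) (S S' : Set V) (u v : V) : Prop :=
  ∃ f : V → V, Set.BijOn f S S' ∧ (∀ w ∈ S, f w = w ∨ G.Adj w (f w)) ∧
    ((u ∈ S ∧ f u = v) ∨ (v ∈ S ∧ f v = u))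

/-- `C` is an eternal vertex cover class of `G` with `k` guards, each configuration being a
vertex cover of size `k` containing `U`: from each configuration, every attack on an edge
can be defended by a legal move to another configuration in `C`. -/
def IsEvcClassOn (G : SimpleGraph V) (U : Set V) (k : ℕ) (C : Set (Set V)) : Prop :=
  C.Nonempty ∧ (∀ S ∈ C, IsVC G S ∧ U ⊆ S ∧ S.ncard = k) ∧
    ∀ S ∈ C, ∀ u v : V, G.Adj u v → ∃ S' ∈ C, Defends G S S' u v

/-- An eternal vertex cover class with no constraint on occupied vertices. -/
def IsEvcClass (G : SimpleGraph V) (k : ℕ) (C : Set (Set V)) : Prop :=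
  IsEvcClassOn G ∅ k C

/-- `evc_U(G)` : the minimum `k` admitting an eternal vertex cover class all of whose
configurations contain `U`. -/
noncomputable def evcOn (G : SimpleGraph V) (U : Set V) : ℕ :=
  sInf {k | ∃ C : Set (Set V), IsEvcClassOn G U k C}

/-- The eternal vertex cover number of `G`. -/
noncomputable def evc (G : SimpleGraph V) : ℕ := evcOn G ∅

/-- `x` is a cut vertex of the connected graph `G`. -/
def IsCutVertex (G : SimpleGraph V) (x : V) : Prop :=
  G.Connected ∧ ¬ (G.induce {v : V | v ≠ x}).Connected

/-- The set of cut vertices of `G`. -/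
def cutVertices (G : SimpleGraph V) : Set V := {x | IsCutVertex G x}

/-- `G` is locally connected: every open neighborhood induces a connected subgraph. -/
def LocallyConnected (G : SimpleGraph V) : Prop :=
  ∀ v : V, (G.induce (G.neighborSet v)).Connected

end EVC

open EVC SimpleGraph


-- ====================== auxiliary construction ======================

/-- Edge list of the counterexample graph: two copies of `K_{2,3}` joined by two edges.
Vertices `0..4` are `x₁..x₅`, vertices `5..9` are `y₁..y₅`. -/
def el : List (Fin 10 × Fin 10) :=
  [(0,8),(0,9),(1,8),(1,9),(2,8),(2,9),(3,5),(3,6),(3,7),(4,5),(4,6),(4,7),(0,5),(3,8)]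

def G10 : SimpleGraph (Fin 10) where
  Adj u v := (u,v) ∈ el ∨ (v,u) ∈ el
  symm := ⟨by intro u v h; revert h; revert u v; decide⟩
  loopless := ⟨by intro u; revert u; decide⟩

instance : DecidableRel G10.Adj := fun _ _ => inferInstanceAs (Decidable (_ ∨ _))

section reach
variable {W : Type*} [Fintype W] [DecidableEq W] (G : SimpleGraph W) [DecidableRel G.Adj]

def reachN (v0 : W) : ℕ → Finset W
  | 0 => {v0}
  | n+1 => (reachN v0 n) ∪ (Finset.univ.filter fun v => ∃ u ∈ reachN v0 n, G.Adj u v)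

lemma reach_spec (v0 : W) (n : ℕ) : ∀ v ∈ reachN G v0 n, G.Reachable v0 v := by
  induction n with
  | zero => intro v hv; rw [reachN, Finset.mem_singleton] at hv; subst hv; exact Reachable.refl _
  | succ n ih =>
    intro v hv
    rw [reachN, Finset.mem_union] at hv
    rcases hv with hv | hv
    · exact ih v hv
    · rw [Finset.mem_filter] at hv
      obtain ⟨-, u, hu, hadj⟩ := hv
      exact (ih u hu).trans hadj.reachable

lemma connected_of_reachN (v0 : W) (n : ℕ) (h : reachN G v0 n = Finset.univ) :
    G.Connected := by
  rw [connected_iff]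
  refine ⟨fun u v => ?_, ⟨v0⟩⟩
  exact ((reach_spec G v0 n u (by rw [h]; exact Finset.mem_univ _)).symm).trans
    (reach_spec G v0 n v (by rw [h]; exact Finset.mem_univ _))
end reach

lemma G10_connected : G10.Connected := connected_of_reachN G10 0 9 (by decide)

lemma G10_induce_connected :
    ∀ x : Fin 10, ((G10.induce {v : Fin 10 | v ≠ x})).Connected := by
  intro x
  fin_cases x
  · exact connected_of_reachN _ ⟨1, by decide⟩ 9 (by decide)
  all_goals exact connected_of_reachN _ ⟨0, by decide⟩ 9 (by decide)

-- the four minimum vertex covers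
def F1 : Finset (Fin 10) := {8,9,3,4,0}
def F2 : Finset (Fin 10) := {8,9,3,4,5}
def F3 : Finset (Fin 10) := {5,6,7,8,9}
def F4 : Finset (Fin 10) := {0,1,2,3,4}

-- a perfect matching, giving the lower bound mvc ≥ 5
def pa : Fin 5 → Fin 10 := ![0,1,2,3,4]
def pb : Fin 5 → Fin 10 := ![5,8,9,6,7]

lemma mvc_lb (S : Set (Fin 10)) (h : IsVC G10 S) : 5 ≤ S.ncard := by
  classical
  have hS : ∀ i : Fin 5, pa i ∈ S ∨ pb i ∈ S := by
    intro i; fin_cases i <;> exact h (by decide)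
  set f : Fin 5 → Fin 10 := fun i => if pa i ∈ S then pa i else pb i with hf
  have hfS : ∀ i, f i ∈ S := by
    intro i; rw [hf]; dsimp only
    split
    · assumption
    · rcases hS i with h1 | h1; · contradiction
      · exact h1
  have hfe : ∀ i, f i = pa i ∨ f i = pb i := by
    intro i; rw [hf]; dsimp only; split
    · exact Or.inl rfl
    · exact Or.inr rfl
  have hinj : Function.Injective f := by
    intro i j hij
    by_contra hne
    have key : ∀ i j : Fin 5, i ≠ j → ∀ a b : Fin 10,
        (a = pa i ∨ a = pb i) → (b = pa j ∨ b = pb j) → a ≠ b := by decide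
    exact key i j hne (f i) (f j) (hfe i) (hfe j) hij
  rw [Set.ncard_eq_toFinset_card']
  calc 5 = (Finset.univ : Finset (Fin 5)).card := by decide
    _ ≤ S.toFinset.card := Finset.card_le_card_of_injOn f
        (fun i _ => Set.mem_toFinset.mpr (hfS i)) (fun i _ j _ => @hinj i j)

lemma vc_classify_fin (s : Finset (Fin 10)) (hcard : s.card = 5)
    (hvc : ∀ p ∈ el, p.1 ∈ s ∨ p.2 ∈ s) :
    s = F1 ∨ s = F2 ∨ s = F3 ∨ s = F4 := by
  have e08 := hvc (0,8) (by decide); have e09 := hvc (0,9) (by decide)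
  have e18 := hvc (1,8) (by decide); have e19 := hvc (1,9) (by decide)
  have e28 := hvc (2,8) (by decide); have e29 := hvc (2,9) (by decide)
  have e35 := hvc (3,5) (by decide); have e36 := hvc (3,6) (by decide)
  have e37 := hvc (3,7) (by decide); have e45 := hvc (4,5) (by decide)
  have e46 := hvc (4,6) (by decide); have e47 := hvc (4,7) (by decide)
  have e05 := hvc (0,5) (by decide); have e38 := hvc (3,8) (by decide)
  simp only at e08 e09 e18 e19 e28 e29 e35 e36 e37 e45 e46 e47 e05 e38
  have hA : ((8:Fin 10) ∈ s ∧ (9:Fin 10) ∈ s) ∨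
      ((0:Fin 10) ∈ s ∧ (1:Fin 10) ∈ s ∧ (2:Fin 10) ∈ s) := by
    by_cases h8 : (8:Fin 10) ∈ s
    · by_cases h9 : (9:Fin 10) ∈ s
      · exact Or.inl ⟨h8, h9⟩
      · exact Or.inr ⟨e09.resolve_right h9, e19.resolve_right h9, e29.resolve_right h9⟩
    · exact Or.inr ⟨e08.resolve_right h8, e18.resolve_right h8, e28.resolve_right h8⟩
  have hB : ((3:Fin 10) ∈ s ∧ (4:Fin 10) ∈ s) ∨
      ((5:Fin 10) ∈ s ∧ (6:Fin 10) ∈ s ∧ (7:Fin 10) ∈ s) := by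
    by_cases h3 : (3:Fin 10) ∈ s
    · by_cases h4 : (4:Fin 10) ∈ s
      · exact Or.inl ⟨h3, h4⟩
      · exact Or.inr ⟨e45.resolve_left h4, e46.resolve_left h4, e47.resolve_left h4⟩
    · exact Or.inr ⟨e35.resolve_left h3, e36.resolve_left h3, e37.resolve_left h3⟩
  rcases hA with ⟨h8, h9⟩ | ⟨h0, h1, h2⟩
  · rcases hB with ⟨h3, h4⟩ | ⟨h5, h6, h7⟩
    · rcases e05 with h0 | h5
      · left
        refine (Finset.eq_of_subset_of_card_le ?_ (by rw [hcard]; decide)).symm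
        simp [F1, Finset.insert_subset_iff, h8, h9, h3, h4, h0]
      · right; left
        refine (Finset.eq_of_subset_of_card_le ?_ (by rw [hcard]; decide)).symm
        simp [F2, Finset.insert_subset_iff, h8, h9, h3, h4, h5]
    · right; right; left
      refine (Finset.eq_of_subset_of_card_le ?_ (by rw [hcard]; decide)).symm
      simp [F3, Finset.insert_subset_iff, h8, h9, h5, h6, h7]
  · rcases hB with ⟨h3, h4⟩ | ⟨h5, h6, h7⟩
    · right; right; right
      refine (Finset.eq_of_subset_of_card_le ?_ (by rw [hcard]; decide)).symm
      simp [F4, Finset.insert_subset_iff, h0, h1, h2, h3, h4]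
    · exfalso
      have hsub : ({0,1,2,5,6,7} : Finset (Fin 10)) ⊆ s := by
        simp [Finset.insert_subset_iff, h0, h1, h2, h5, h6, h7]
      have := Finset.card_le_card hsub
      rw [hcard] at this
      simp at this

lemma vc_classify (S : Set (Fin 10)) (h : IsVC G10 S) (hc : S.ncard = 5) :
    S = ↑F1 ∨ S = ↑F2 ∨ S = ↑F3 ∨ S = ↑F4 := by
  classical
  have hcard : S.toFinset.card = 5 := by rw [← Set.ncard_eq_toFinset_card']; exact hc
  have hvc : ∀ p ∈ el, p.1 ∈ S.toFinset ∨ p.2 ∈ S.toFinset := by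
    intro p hp
    have : G10.Adj p.1 p.2 := Or.inl (by simpa using hp)
    simpa [Set.mem_toFinset] using h this
  have hS : S = ↑S.toFinset := by simp
  rcases vc_classify_fin S.toFinset hcard hvc with h1 | h1 | h1 | h1 <;>
    rw [hS, h1] <;> tauto

lemma isVC_F4 : IsVC G10 ↑F4 := by intro u v h; revert h; revert u v; decide
lemma isVC_F3 : IsVC G10 ↑F3 := by intro u v h; revert h; revert u v; decide

lemma mvc_G10 : mvc G10 = 5 := by
  apply le_antisymm
  · apply Nat.sInf_le
    exact ⟨↑F4, isVC_F4, by rw [Set.ncard_coe_finset]; decide⟩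
  · refine le_csInf ⟨5, ↑F4, isVC_F4, by rw [Set.ncard_coe_finset]; decide⟩ ?_
    rintro k ⟨S, hS, rfl⟩
    exact mvc_lb S hS

lemma noDef_from_F4 (T : Set (Fin 10)) (hT : T = ↑F1 ∨ T = ↑F2 ∨ T = ↑F3 ∨ T = ↑F4) :
    ¬ Defends G10 ↑F4 T 3 8 := by
  rintro ⟨f, hbij, hmove, hcross⟩
  have h38 : f 3 = 8 := by
    rcases hcross with ⟨-, h⟩ | ⟨h, -⟩
    · exact h
    · rw [Finset.mem_coe] at h; exact absurd h (by decide)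
  have m1 : (1:Fin 10) ∈ (↑F4 : Set (Fin 10)) := Finset.mem_coe.mpr (by decide)
  have m2 : (2:Fin 10) ∈ (↑F4 : Set (Fin 10)) := Finset.mem_coe.mpr (by decide)
  have m3 : (3:Fin 10) ∈ (↑F4 : Set (Fin 10)) := Finset.mem_coe.mpr (by decide)
  have last : T = ↑F4 → False := by
    rintro rfl
    have := hbij.mapsTo m3
    rw [h38, Finset.mem_coe] at this
    exact absurd this (by decide)
  rcases hT with rfl | rfl | rfl | h4
  case _ =>
    have key : ∀ z : Fin 10, z ∈ F1 → (z = 1 ∨ G10.Adj 1 z) → z = 8 ∨ z = 9 := by decide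
    have key2 : ∀ z : Fin 10, z ∈ F1 → (z = 2 ∨ G10.Adj 2 z) → z = 8 ∨ z = 9 := by decide
    have hf1 := key _ (Finset.mem_coe.mp (hbij.mapsTo m1)) (hmove 1 m1)
    have hf2 := key2 _ (Finset.mem_coe.mp (hbij.mapsTo m2)) (hmove 2 m2)
    rcases hf1 with hf1 | hf1
    · exact absurd (hbij.injOn m1 m3 (hf1.trans h38.symm)) (by decide)
    · rcases hf2 with hf2 | hf2
      · exact absurd (hbij.injOn m2 m3 (hf2.trans h38.symm)) (by decide)
      · exact absurd (hbij.injOn m1 m2 (hf1.trans hf2.symm)) (by decide)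
  case _ =>
    have key : ∀ z : Fin 10, z ∈ F2 → (z = 1 ∨ G10.Adj 1 z) → z = 8 ∨ z = 9 := by decide
    have key2 : ∀ z : Fin 10, z ∈ F2 → (z = 2 ∨ G10.Adj 2 z) → z = 8 ∨ z = 9 := by decide
    have hf1 := key _ (Finset.mem_coe.mp (hbij.mapsTo m1)) (hmove 1 m1)
    have hf2 := key2 _ (Finset.mem_coe.mp (hbij.mapsTo m2)) (hmove 2 m2)
    rcases hf1 with hf1 | hf1
    · exact absurd (hbij.injOn m1 m3 (hf1.trans h38.symm)) (by decide)
    · rcases hf2 with hf2 | hf2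
      · exact absurd (hbij.injOn m2 m3 (hf2.trans h38.symm)) (by decide)
      · exact absurd (hbij.injOn m1 m2 (hf1.trans hf2.symm)) (by decide)
  case _ =>
    have key : ∀ z : Fin 10, z ∈ F3 → (z = 1 ∨ G10.Adj 1 z) → z = 8 ∨ z = 9 := by decide
    have key2 : ∀ z : Fin 10, z ∈ F3 → (z = 2 ∨ G10.Adj 2 z) → z = 8 ∨ z = 9 := by decide
    have hf1 := key _ (Finset.mem_coe.mp (hbij.mapsTo m1)) (hmove 1 m1)
    have hf2 := key2 _ (Finset.mem_coe.mp (hbij.mapsTo m2)) (hmove 2 m2)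
    rcases hf1 with hf1 | hf1
    · exact absurd (hbij.injOn m1 m3 (hf1.trans h38.symm)) (by decide)
    · rcases hf2 with hf2 | hf2
      · exact absurd (hbij.injOn m2 m3 (hf2.trans h38.symm)) (by decide)
      · exact absurd (hbij.injOn m1 m2 (hf1.trans hf2.symm)) (by decide)
  case _ => exact last h4

lemma noDef_from_F3 (T : Set (Fin 10)) (hT : T = ↑F1 ∨ T = ↑F2 ∨ T = ↑F3 ∨ T = ↑F4) :
    ¬ Defends G10 ↑F3 T 3 8 := by
  rintro ⟨f, hbij, hmove, hcross⟩
  have h83 : f 8 = 3 := by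
    rcases hcross with ⟨h, -⟩ | ⟨-, h⟩
    · rw [Finset.mem_coe] at h; exact absurd h (by decide)
    · exact h
  have m6 : (6:Fin 10) ∈ (↑F3 : Set (Fin 10)) := Finset.mem_coe.mpr (by decide)
  have m7 : (7:Fin 10) ∈ (↑F3 : Set (Fin 10)) := Finset.mem_coe.mpr (by decide)
  have m8 : (8:Fin 10) ∈ (↑F3 : Set (Fin 10)) := Finset.mem_coe.mpr (by decide)
  have self : T = ↑F3 → False := by
    rintro rfl
    have := hbij.mapsTo m8
    rw [h83, Finset.mem_coe] at this
    exact absurd this (by decide)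
  rcases hT with rfl | rfl | h3 | rfl
  case _ =>
    have key : ∀ z : Fin 10, z ∈ F1 → (z = 6 ∨ G10.Adj 6 z) → z = 3 ∨ z = 4 := by decide
    have key2 : ∀ z : Fin 10, z ∈ F1 → (z = 7 ∨ G10.Adj 7 z) → z = 3 ∨ z = 4 := by decide
    have hf6 := key _ (Finset.mem_coe.mp (hbij.mapsTo m6)) (hmove 6 m6)
    have hf7 := key2 _ (Finset.mem_coe.mp (hbij.mapsTo m7)) (hmove 7 m7)
    rcases hf6 with hf6 | hf6
    · exact absurd (hbij.injOn m6 m8 (hf6.trans h83.symm)) (by decide)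
    · rcases hf7 with hf7 | hf7
      · exact absurd (hbij.injOn m7 m8 (hf7.trans h83.symm)) (by decide)
      · exact absurd (hbij.injOn m6 m7 (hf6.trans hf7.symm)) (by decide)
  case _ =>
    have key : ∀ z : Fin 10, z ∈ F2 → (z = 6 ∨ G10.Adj 6 z) → z = 3 ∨ z = 4 := by decide
    have key2 : ∀ z : Fin 10, z ∈ F2 → (z = 7 ∨ G10.Adj 7 z) → z = 3 ∨ z = 4 := by decide
    have hf6 := key _ (Finset.mem_coe.mp (hbij.mapsTo m6)) (hmove 6 m6)
    have hf7 := key2 _ (Finset.mem_coe.mp (hbij.mapsTo m7)) (hmove 7 m7)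
    rcases hf6 with hf6 | hf6
    · exact absurd (hbij.injOn m6 m8 (hf6.trans h83.symm)) (by decide)
    · rcases hf7 with hf7 | hf7
      · exact absurd (hbij.injOn m7 m8 (hf7.trans h83.symm)) (by decide)
      · exact absurd (hbij.injOn m6 m7 (hf6.trans hf7.symm)) (by decide)
  case _ => exact self h3
  case _ =>
    have key : ∀ z : Fin 10, z ∈ F4 → (z = 6 ∨ G10.Adj 6 z) → z = 3 ∨ z = 4 := by decide
    have key2 : ∀ z : Fin 10, z ∈ F4 → (z = 7 ∨ G10.Adj 7 z) → z = 3 ∨ z = 4 := by decide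
    have hf6 := key _ (Finset.mem_coe.mp (hbij.mapsTo m6)) (hmove 6 m6)
    have hf7 := key2 _ (Finset.mem_coe.mp (hbij.mapsTo m7)) (hmove 7 m7)
    rcases hf6 with hf6 | hf6
    · exact absurd (hbij.injOn m6 m8 (hf6.trans h83.symm)) (by decide)
    · rcases hf7 with hf7 | hf7
      · exact absurd (hbij.injOn m7 m8 (hf7.trans h83.symm)) (by decide)
      · exact absurd (hbij.injOn m6 m7 (hf6.trans hf7.symm)) (by decide)

lemma force_F4 (S T : Set (Fin 10)) (hS : S = ↑F1 ∨ S = ↑F2)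
    (hT : T = ↑F1 ∨ T = ↑F2 ∨ T = ↑F3 ∨ T = ↑F4)
    (hD : Defends G10 S T 1 8) : T = ↑F4 := by
  obtain ⟨f, hbij, hmove, hcross⟩ := hD
  have h81 : f 8 = 1 ∧ (8:Fin 10) ∈ S := by
    rcases hcross with ⟨h, -⟩ | ⟨h8, h⟩
    · rcases hS with rfl | rfl <;> (rw [Finset.mem_coe] at h; exact absurd h (by decide))
    · exact ⟨h, h8⟩
  have h1T : (1:Fin 10) ∈ T := h81.1 ▸ hbij.mapsTo h81.2
  rcases hT with rfl | rfl | rfl | rfl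
  · rw [Finset.mem_coe] at h1T; exact absurd h1T (by decide)
  · rw [Finset.mem_coe] at h1T; exact absurd h1T (by decide)
  · rw [Finset.mem_coe] at h1T; exact absurd h1T (by decide)
  · rfl

lemma no_evc_class_5 : ¬ ∃ C : Set (Set (Fin 10)), IsEvcClassOn G10 ∅ 5 C := by
  rintro ⟨C, ⟨S0, hS0⟩, hconf, hdef⟩
  have hCls : ∀ S ∈ C, S = ↑F1 ∨ S = ↑F2 ∨ S = ↑F3 ∨ S = ↑F4 := fun S hS =>
    vc_classify S (hconf S hS).1 (hconf S hS).2.2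
  have adj38 : G10.Adj 3 8 := by decide
  have adj18 : G10.Adj 1 8 := by decide
  have hF4 : (↑F4 : Set (Fin 10)) ∉ C := by
    intro h
    obtain ⟨S', hS', hD⟩ := hdef _ h 3 8 adj38
    exact noDef_from_F4 S' (hCls S' hS') hD
  have hF3 : (↑F3 : Set (Fin 10)) ∉ C := by
    intro h
    obtain ⟨S', hS', hD⟩ := hdef _ h 3 8 adj38
    exact noDef_from_F3 S' (hCls S' hS') hD
  rcases hCls S0 hS0 with h | h | h | h
  · obtain ⟨S', hS', hD⟩ := hdef _ hS0 1 8 adj18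
    rw [h] at hD
    exact hF4 ((force_F4 _ S' (Or.inl rfl) (hCls S' hS') hD) ▸ hS')
  · obtain ⟨S', hS', hD⟩ := hdef _ hS0 1 8 adj18
    rw [h] at hD
    exact hF4 ((force_F4 _ S' (Or.inr rfl) (hCls S' hS') hD) ▸ hS')
  · exact hF3 (h ▸ hS0)
  · exact hF4 (h ▸ hS0)

lemma evc_ne_5 : evc G10 ≠ 5 := by
  intro h
  have hev : evc G10 = sInf {k | ∃ C : Set (Set (Fin 10)), IsEvcClassOn G10 ∅ k C} := rfl
  by_cases hne : {k | ∃ C : Set (Set (Fin 10)), IsEvcClassOn G10 ∅ k C}.Nonempty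
  · have hmem := Nat.sInf_mem hne
    rw [← hev, h] at hmem
    exact no_evc_class_5 hmem
  · rw [Set.not_nonempty_iff_eq_empty] at hne
    rw [hev, hne, Nat.sInf_empty] at h
    exact absurd h (by norm_num)

/-- There is a biconnected bipartite (planar) graph on 10 vertices with
maximum degree 4 in which every vertex lies in some minimum vertex cover, yet
`evc G ≠ mvc G`. -/
theorem exists_biconnected_bipartite_counterexample :
    ∃ G : SimpleGraph (Fin 10),
      G.Connected ∧ (∀ x : Fin 10, ¬ IsCutVertex G x) ∧ G.Colorable 2 ∧
      (∀ w : Fin 10, (G.neighborSet w).ncard ≤ 4) ∧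
      (∀ w : Fin 10, ∃ S : Set (Fin 10), IsVC G S ∧ S.ncard = mvc G ∧ w ∈ S) ∧
      evc G ≠ mvc G := by
  refine ⟨G10, G10_connected, ?_, ?_, ?_, ?_, ?_⟩
  · intro x hcut
    exact hcut.2 (G10_induce_connected x)
  · exact ⟨SimpleGraph.Coloring.mk (fun v => if v.val < 5 then 0 else 1)
      (by intro u v h; revert h; revert u v; decide)⟩
  · intro w
    rw [Set.ncard_eq_toFinset_card']
    revert w; decide
  · intro w
    by_cases hw : w.val < 5
    · refine ⟨↑F4, isVC_F4, ?_, ?_⟩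
      · rw [Set.ncard_coe_finset, mvc_G10]; decide
      · exact Finset.mem_coe.mpr (by revert hw; revert w; decide)
    · refine ⟨↑F3, isVC_F3, ?_, ?_⟩
      · rw [Set.ncard_coe_finset, mvc_G10]; decide
      · exact Finset.mem_coe.mpr (by revert hw; revert w; decide)
  · rw [mvc_G10]
    exact evc_ne_5
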